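/- arXiv:2405.16560 — 2 statements merged into one kernel-verified Lean document; each statement's English description precedes it below -/
import Mathlib

section
/- Let L₀, …, L_{m−1} : ℝⁿ → ℝ be twice continuously differentiable with L̄ = (1/m)∑ᵢ Lᵢ, and set vᵢ(θ) = β(∇L̄(θ) − ∇Lᵢ(θ)). Then the first-order Taylor approximation of the averaged displaced gradient satisfies: (1/m) ∑ᵢ [∇Lᵢ(θ) − β ∇²Lᵢ(θ)(∇L̄(θ) − ∇Lᵢ(θ))] = ∇L̄(θ) + (β/(2m)) ∇( ∑ᵢ ‖∇Lᵢ(θ) − ∇L̄(θ)‖² ). -/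
section IGRAux

open InnerProductSpace

variable {E : Type*} [NormedAddCommGroup E] [InnerProductSpace ℝ E] [CompleteSpace E]

local notation "⟪" x ", " y "⟫" => @inner ℝ _ _ x y

/-- gradient as toDual.symm of fderiv, as a function. -/
lemma gradient_def (f : E → ℝ) :
    gradient f = fun x => (toDual ℝ E).symm (fderiv ℝ f x) := rfl

lemma grad_hasFDerivAt {f : E → ℝ} (hf : ContDiff ℝ 2 f) (x : E) :
    HasFDerivAt (gradient f)
      (((toDual ℝ E).symm.toContinuousLinearEquiv :
          (E →L[ℝ] ℝ) ≃L[ℝ] E).toContinuousLinearMap.comp (fderiv ℝ (fderiv ℝ f) x)) x := by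
  rw [gradient_def]
  have h1 : DifferentiableAt ℝ (fderiv ℝ f) x := by
    have := (hf.fderiv_right (m := 1) le_rfl).differentiable (by norm_num)
    exact this x
  exact (((toDual ℝ E).symm.toContinuousLinearEquiv.toContinuousLinearMap).hasFDerivAt).comp x
    h1.hasFDerivAt

lemma grad_inner_fderiv {f : E → ℝ} (hf : ContDiff ℝ 2 f) (x : E) (u v : E) :
    ⟪(fderiv ℝ (gradient f) x) u, v⟫ = fderiv ℝ (fderiv ℝ f) x u v := by
  rw [(grad_hasFDerivAt hf x).fderiv]
  simp [toDual_symm_apply]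

lemma grad_fderiv_symm {f : E → ℝ} (hf : ContDiff ℝ 2 f) (x : E) (u v : E) :
    ⟪(fderiv ℝ (gradient f) x) u, v⟫ = ⟪(fderiv ℝ (gradient f) x) v, u⟫ := by
  rw [grad_inner_fderiv hf, grad_inner_fderiv hf]
  exact (hf.contDiffAt.isSymmSndFDerivAt (by norm_num)).eq u v

/-- key: gradient of squared norm of a vector field with symmetric derivative -/
lemma hasGradientAt_normSq {F : E → E} {F' : E →L[ℝ] E} {x : E}
    (hF : HasFDerivAt F F' x) (hsymm : ∀ u v, ⟪F' u, v⟫ = ⟪F' v, u⟫) :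
    HasGradientAt (fun t => ‖F t‖ ^ 2) ((2 : ℝ) • F' (F x)) x := by
  rw [hasGradientAt_iff_hasFDerivAt]
  have h := hF.inner ℝ hF
  have heq : (fun t => ‖F t‖ ^ 2) = fun t => ⟪F t, F t⟫ := by
    funext t; rw [real_inner_self_eq_norm_sq]
  rw [heq]
  refine h.congr_fderiv ?_
  ext w
  simp only [toDual_apply_apply, ContinuousLinearMap.comp_apply, ContinuousLinearMap.prod_apply,
    fderivInnerCLM_apply, real_inner_smul_left]
  have key : ⟪F x, F' w⟫ = ⟪F' (F x), w⟫ := by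
    rw [real_inner_comm]; exact hsymm w (F x)
  rw [key, hsymm w (F x)]; ring

lemma igr_algebra {E : Type*} [NormedAddCommGroup E] [NormedSpace ℝ E]
    {m : ℕ} (hm : (m : ℝ) ≠ 0) (β : ℝ) (G : Fin m → E) (H : Fin m → E →L[ℝ] E)
    (Gb : E) (Hb : E →L[ℝ] E) (hGb : Gb = (1 / (m : ℝ)) • ∑ j, G j)
    (hHb : Hb = (1 / (m : ℝ)) • ∑ j, H j) :
    (1 / (m : ℝ)) • ∑ i, (G i - β • (H i) (Gb - G i))
      = Gb + (β / (2 * (m : ℝ))) • ∑ i, (2 : ℝ) • ((H i - Hb) (G i - Gb)) := by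
  have hsum0 : ∑ i : Fin m, (G i - Gb) = 0 := by
    rw [Finset.sum_sub_distrib, Finset.sum_const, Finset.card_univ, Fintype.card_fin, hGb,
      ← Nat.cast_smul_eq_nsmul ℝ, smul_smul, mul_one_div_cancel hm, one_smul, sub_self]
  have h1 : ∑ i : Fin m, ((H i - Hb) (G i - Gb)) = ∑ i : Fin m, (H i) (G i - Gb) := by
    simp only [ContinuousLinearMap.sub_apply]
    rw [Finset.sum_sub_distrib, ← map_sum, hsum0, map_zero, sub_zero]
  rw [← Finset.smul_sum, h1]
  have h2 : ∀ i, (H i) (Gb - G i) = -((H i) (G i - Gb)) := by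
    intro i; rw [← map_neg, neg_sub]
  simp only [h2, smul_neg, sub_neg_eq_add]
  rw [Finset.sum_add_distrib, smul_add, ← hGb]
  congr 1
  rw [← Finset.smul_sum, smul_smul, smul_smul]
  congr 1
  field_simp

end IGRAux

open InnerProductSpace in
/-- The first-order Taylor approximation of the averaged displaced gradient equals the ERM
gradient plus `β/(2m)` times the gradient of the gradient-variance regularizer. -/
theorem igr_first_order_identity
    (n m : ℕ) (hm : 1 ≤ m) (β : ℝ) (L : Fin m → EuclideanSpace ℝ (Fin n) → ℝ)
    (hL : ∀ i, ContDiff ℝ 2 (L i)) (θ : EuclideanSpace ℝ (Fin n)) :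
    (1 / (m : ℝ)) • ∑ i : Fin m,
      (gradient (L i) θ
        - β • (fderiv ℝ (gradient (L i)) θ)
            (gradient (fun θ => (1 / (m : ℝ)) * ∑ j : Fin m, L j θ) θ - gradient (L i) θ))
      = gradient (fun θ => (1 / (m : ℝ)) * ∑ j : Fin m, L j θ) θ
        + (β / (2 * (m : ℝ))) • gradient
            (fun θ => ∑ i : Fin m,
              ‖gradient (L i) θ - gradient (fun θ => (1 / (m : ℝ)) * ∑ j : Fin m, L j θ) θ‖ ^ 2)
            θ := by
  classical
  have hm0 : (m : ℝ) ≠ 0 := Nat.cast_ne_zero.mpr (by omega)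
  set Lb : EuclideanSpace ℝ (Fin n) → ℝ := fun θ => (1 / (m : ℝ)) * ∑ j : Fin m, L j θ with hLbdef
  have hLbC : ContDiff ℝ 2 Lb := contDiff_const.mul (ContDiff.sum fun i _ => hL i)
  have hdL : ∀ i, Differentiable ℝ (L i) := fun i => (hL i).differentiable (by norm_num)
  -- gradient of Lb
  have gb : ∀ x, gradient Lb x = (1 / (m : ℝ)) • ∑ j : Fin m, gradient (L j) x := by
    intro x
    have hs : HasFDerivAt (fun θ => ∑ j : Fin m, L j θ)
        (∑ j : Fin m, fderiv ℝ (L j) x) x :=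
      HasFDerivAt.fun_sum fun j _ => (hdL j x).hasFDerivAt
    have hLbF : HasFDerivAt Lb ((1 / (m : ℝ)) • ∑ j : Fin m, fderiv ℝ (L j) x) x :=
      hs.const_mul _
    show (toDual ℝ (EuclideanSpace ℝ (Fin n))).symm (fderiv ℝ Lb x) = _
    rw [hLbF.fderiv, map_smul, map_sum]
    rfl
  -- differentiability of gradients
  have hdgi : ∀ i, DifferentiableAt ℝ (gradient (L i)) θ :=
    fun i => (grad_hasFDerivAt (hL i) θ).differentiableAt
  have hdgb : DifferentiableAt ℝ (gradient Lb) θ :=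
    (grad_hasFDerivAt hLbC θ).differentiableAt
  -- Hessian of Lb
  have hHb : fderiv ℝ (gradient Lb) θ
      = (1 / (m : ℝ)) • ∑ j : Fin m, fderiv ℝ (gradient (L j)) θ := by
    have hgb' : gradient Lb = fun x => (1 / (m : ℝ)) • ∑ j : Fin m, gradient (L j) x :=
      funext gb
    rw [hgb']
    have hs : HasFDerivAt (fun x => ∑ j : Fin m, gradient (L j) x)
        (∑ j : Fin m, fderiv ℝ (gradient (L j)) θ) θ :=
      HasFDerivAt.fun_sum fun j _ => (hdgi j).hasFDerivAt
    exact (hs.fun_const_smul _).fderiv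
  -- gradient of the variance regularizer
  have hV : gradient (fun x => ∑ i : Fin m, ‖gradient (L i) x - gradient Lb x‖ ^ 2) θ
      = ∑ i : Fin m, (2 : ℝ) •
          ((fderiv ℝ (gradient (L i)) θ - fderiv ℝ (gradient Lb) θ)
            (gradient (L i) θ - gradient Lb θ)) := by
    have hgrad : ∀ i : Fin m, HasGradientAt (fun x => ‖gradient (L i) x - gradient Lb x‖ ^ 2)
        ((2 : ℝ) • ((fderiv ℝ (gradient (L i)) θ - fderiv ℝ (gradient Lb) θ)
            (gradient (L i) θ - gradient Lb θ))) θ := by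
      intro i
      refine hasGradientAt_normSq (((hdgi i).hasFDerivAt).sub hdgb.hasFDerivAt) ?_
      intro u v
      simp only [ContinuousLinearMap.sub_apply, inner_sub_left]
      rw [grad_fderiv_symm (hL i) θ u v, grad_fderiv_symm hLbC θ u v]
    have hsum : HasFDerivAt (fun x => ∑ i : Fin m, ‖gradient (L i) x - gradient Lb x‖ ^ 2)
        (∑ i : Fin m, toDual ℝ (EuclideanSpace ℝ (Fin n)) ((2 : ℝ) •
          ((fderiv ℝ (gradient (L i)) θ - fderiv ℝ (gradient Lb) θ)
            (gradient (L i) θ - gradient Lb θ)))) θ :=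
      HasFDerivAt.fun_sum fun i _ => (hasGradientAt_iff_hasFDerivAt.mp (hgrad i))
    have := (hasFDerivAt_iff_hasGradientAt.mp hsum).gradient
    rw [this, map_sum]
    simp
  rw [hV]
  exact igr_algebra hm0 β (fun i => gradient (L i) θ) (fun i => fderiv ℝ (gradient (L i)) θ)
    (gradient Lb θ) (fderiv ℝ (gradient Lb) θ) (gb θ) hHb
end

section
/- Let L₀, …, L_{m−1} : ℝⁿ → ℝ each have ρ-Lipschitz Hessians, let vᵢ(θ) = β(∇L̄(θ) − ∇Lᵢ(θ)) where L̄ = (1/m)∑ᵢ Lᵢ, and suppose ‖∇L̄(θ) − ∇Lᵢ(θ)‖ ≤ G for all i. Then ‖ (1/m)∑ᵢ ∇Lᵢ(θ − vᵢ(θ)) − [∇L̄(θ) + (β/(2m)) ∇(∑ᵢ ‖∇Lᵢ(θ) − ∇L̄(θ)‖²)] ‖ ≤ (ρ/2) β² G². -/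
open InnerProductSpace Finset

local notation "⟪" x ", " y "⟫" => @inner ℝ _ _ x y

section Aux

lemma taylor_grad_bound {E F : Type*} [NormedAddCommGroup E] [NormedSpace ℝ E]
    [NormedAddCommGroup F] [NormedSpace ℝ F] [CompleteSpace F]
    {f : E → F} {ρ : ℝ} (hρ : 0 ≤ ρ)
    (hdiff : Differentiable ℝ f)
    (hlip : ∀ a b, ‖fderiv ℝ f a - fderiv ℝ f b‖ ≤ ρ * ‖a - b‖)
    (x v : E) :
    ‖f (x + v) - f x - fderiv ℝ f x v‖ ≤ ρ / 2 * ‖v‖ ^ 2 := by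
  set φ : ℝ → F := fun t => f (x + t • v) - t • (fderiv ℝ f x v) with hφ
  set ψ : ℝ → F := fun t => fderiv ℝ f (x + t • v) v - fderiv ℝ f x v with hψ
  have hderiv : ∀ t : ℝ, HasDerivAt φ (ψ t) t := by
    intro t
    have h1 : HasDerivAt (fun t : ℝ => x + t • v) v t := by
      simpa using ((hasDerivAt_id t).smul_const v).const_add x
    have h2 : HasDerivAt (fun t : ℝ => f (x + t • v)) (fderiv ℝ f (x + t • v) v) t :=
      (hdiff _).hasFDerivAt.comp_hasDerivAt t h1
    simpa [hφ, hψ] using h2.fun_sub ((hasDerivAt_id t).smul_const (fderiv ℝ f x v))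
  have hlipf : LipschitzWith ρ.toNNReal (fun a => fderiv ℝ f a) := by
    apply LipschitzWith.of_dist_le_mul
    intro a b
    simpa [dist_eq_norm, Real.coe_toNNReal ρ hρ] using hlip a b
  have hcont : Continuous ψ := by
    have : Continuous fun t : ℝ => fderiv ℝ f (x + t • v) :=
      hlipf.continuous.comp (by continuity)
    exact ((ContinuousLinearMap.apply ℝ F v).continuous.comp this).sub continuous_const
  have key : ∫ t in (0:ℝ)..1, ψ t = φ 1 - φ 0 :=
    intervalIntegral.integral_eq_sub_of_hasDerivAt (fun t _ => hderiv t)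
      (hcont.intervalIntegrable 0 1)
  have hbound : ‖∫ t in (0:ℝ)..1, ψ t‖ ≤ |∫ t in (0:ℝ)..1, ρ * ‖v‖ ^ 2 * t| := by
    apply intervalIntegral.norm_integral_le_abs_of_norm_le
    · filter_upwards [MeasureTheory.ae_restrict_mem measurableSet_uIoc] with t ht
      have ht0 : 0 < t := by
        rcases Set.mem_uIoc.1 ht with h | h
        · exact h.1
        · linarith [h.1, h.2]
      calc ‖ψ t‖ ≤ ‖fderiv ℝ f (x + t • v) - fderiv ℝ f x‖ * ‖v‖ := by
            simpa [hψ] using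
              ((fderiv ℝ f (x + t • v) - fderiv ℝ f x).le_opNorm v)
        _ ≤ ρ * ‖t • v‖ * ‖v‖ := by
            gcongr
            simpa using hlip (x + t • v) x
        _ = ρ * ‖v‖ ^ 2 * t := by
            rw [norm_smul]
            simp [Real.norm_eq_abs, abs_of_pos ht0]
            ring
    · exact (Continuous.intervalIntegrable (by continuity) 0 1)
  have hval : ∫ t in (0:ℝ)..1, ρ * ‖v‖ ^ 2 * t = ρ / 2 * ‖v‖ ^ 2 := by
    rw [intervalIntegral.integral_const_mul, integral_id]
    ring
  have : ‖φ 1 - φ 0‖ ≤ ρ / 2 * ‖v‖ ^ 2 := by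
    rw [← key]
    refine hbound.trans ?_
    rw [hval, abs_of_nonneg (by positivity)]
  simpa [hφ, sub_sub, add_comm] using this

variable {E : Type*} [NormedAddCommGroup E] [InnerProductSpace ℝ E] [CompleteSpace E]

lemma inner_gradient_eq (f : E → ℝ) (x w : E) : ⟪gradient f x, w⟫ = fderiv ℝ f x w :=
  toDual_symm_apply

lemma contDiff_gradient {f : E → ℝ} (hf : ContDiff ℝ 2 f) : ContDiff ℝ 1 (gradient f) := by
  have e : gradient f = fun x => (toDual ℝ E).symm (fderiv ℝ f x) := rfl
  rw [e]
  exact (toDual ℝ E).symm.contDiff.comp (hf.fderiv_right (by norm_num))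

lemma hessian_symm {f : E → ℝ} (hf : ContDiff ℝ 2 f) (θ u w : E) :
    ⟪fderiv ℝ (gradient f) θ u, w⟫ = ⟪fderiv ℝ (gradient f) θ w, u⟫ := by
  have hdg : Differentiable ℝ (gradient f) :=
    (contDiff_gradient hf).differentiable one_ne_zero
  have hdf' : Differentiable ℝ (fderiv ℝ f) :=
    (hf.fderiv_right (m := 1) (by norm_num)).differentiable one_ne_zero
  have key : ∀ w u : E, ⟪w, fderiv ℝ (gradient f) θ u⟫ = fderiv ℝ (fderiv ℝ f) θ u w := by
    intro w u
    have A : HasFDerivAt (fun x => ⟪w, gradient f x⟫)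
        ((innerSL ℝ w).comp (fderiv ℝ (gradient f) θ)) θ :=
      (innerSL ℝ w).hasFDerivAt.comp θ (hdg θ).hasFDerivAt
    have B : HasFDerivAt (fun x => fderiv ℝ f x w)
        ((ContinuousLinearMap.apply ℝ ℝ w).comp (fderiv ℝ (fderiv ℝ f) θ)) θ :=
      (ContinuousLinearMap.apply ℝ ℝ w).hasFDerivAt.comp θ (hdf' θ).hasFDerivAt
    have hfun : (fun x => ⟪w, gradient f x⟫) = fun x => fderiv ℝ f x w := by
      funext x
      rw [real_inner_comm]
      exact inner_gradient_eq f x w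
    rw [hfun] at A
    have hEq := A.unique B
    have := ContinuousLinearMap.ext_iff.1 hEq u
    simpa using this
  have hs : IsSymmSndFDerivAt ℝ f θ := hf.contDiffAt.isSymmSndFDerivAt (by simp)
  rw [real_inner_comm, key w u, real_inner_comm, key u w, hs.eq]

lemma hasGradientAt_const_mul_sum {m : ℕ} (c : ℝ) (f : Fin m → E → ℝ) (x : E)
    (hf : ∀ i, DifferentiableAt ℝ (f i) x) :
    HasGradientAt (fun y => c * ∑ i, f i y) (c • ∑ i, gradient (f i) x) x := by
  have h : HasFDerivAt (fun y => c * ∑ i, f i y) (c • ∑ i : Fin m, fderiv ℝ (f i) x) x :=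
    (HasFDerivAt.fun_sum fun i _ => (hf i).hasFDerivAt).const_mul c
  rw [hasGradientAt_iff_hasFDerivAt]
  have : (toDual ℝ E) (c • ∑ i, gradient (f i) x) = c • ∑ i : Fin m, fderiv ℝ (f i) x := by
    rw [map_smulₛₗ, map_sum]
    simp [gradient, starRingEnd_apply]
  rw [this]
  exact h

end Aux

/-- Quantified `O(β²)` remainder for the implicit-gradient-regularization update: if each `Lᵢ`
has `ρ`-Lipschitz Hessian and the gradient deviations at `θ` are bounded by `G`, then the
averaged displaced gradient differs from the IGR first-order expression by at most `(ρ/2)β²G²`. -/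
theorem igr_remainder_bound
    (n m : ℕ) (hm : 1 ≤ m) (β ρ G : ℝ) (hρ : 0 < ρ) (hG : 0 < G)
    (L : Fin m → EuclideanSpace ℝ (Fin n) → ℝ)
    (hL : ∀ i, ContDiff ℝ 2 (L i))
    (hHess : ∀ i, ∀ θ₁ θ₂ : EuclideanSpace ℝ (Fin n),
      ‖fderiv ℝ (gradient (L i)) θ₁ - fderiv ℝ (gradient (L i)) θ₂‖ ≤ ρ * ‖θ₁ - θ₂‖)
    (θ : EuclideanSpace ℝ (Fin n))
    (hGbound : ∀ i : Fin m,
      ‖gradient (fun θ => (1 / (m : ℝ)) * ∑ j : Fin m, L j θ) θ - gradient (L i) θ‖ ≤ G) :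
    ‖(1 / (m : ℝ)) • ∑ i : Fin m,
        gradient (L i)
          (θ - β • (gradient (fun θ => (1 / (m : ℝ)) * ∑ j : Fin m, L j θ) θ
                      - gradient (L i) θ))
      - (gradient (fun θ => (1 / (m : ℝ)) * ∑ j : Fin m, L j θ) θ
          + (β / (2 * (m : ℝ))) • gradient
              (fun θ => ∑ i : Fin m,
                ‖gradient (L i) θ
                  - gradient (fun θ => (1 / (m : ℝ)) * ∑ j : Fin m, L j θ) θ‖ ^ 2)
              θ)‖
      ≤ (ρ / 2) * β ^ 2 * G ^ 2 := by
  classical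
  have hm0 : (m : ℝ) ≠ 0 := Nat.cast_ne_zero.2 (by omega)
  have hdiffL : ∀ i, Differentiable ℝ (L i) := fun i => (hL i).differentiable (by norm_num)
  have hcg : ∀ i, ContDiff ℝ 1 (gradient (L i)) := fun i => contDiff_gradient (hL i)
  have hdg : ∀ i, Differentiable ℝ (gradient (L i)) := fun i => (hcg i).differentiable one_ne_zero
  have hgrad_bar : ∀ x : EuclideanSpace ℝ (Fin n),
      gradient (fun y => (1 / (m : ℝ)) * ∑ j : Fin m, L j y) x
        = (1 / (m : ℝ)) • ∑ j : Fin m, gradient (L j) x :=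
    fun x => (hasGradientAt_const_mul_sum _ _ x fun i => (hdiffL i).differentiableAt).gradient
  simp only [hgrad_bar] at hGbound ⊢
  set H : Fin m → (EuclideanSpace ℝ (Fin n) →L[ℝ] EuclideanSpace ℝ (Fin n)) :=
    fun i => fderiv ℝ (gradient (L i)) θ with hH
  set Hbar : EuclideanSpace ℝ (Fin n) →L[ℝ] EuclideanSpace ℝ (Fin n) :=
    (1 / (m : ℝ)) • ∑ j : Fin m, H j with hHbar
  set Fv : Fin m → EuclideanSpace ℝ (Fin n) :=
    fun i => gradient (L i) θ - (1 / (m : ℝ)) • ∑ j : Fin m, gradient (L j) θ with hFv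
  -- sum of deviations vanishes
  have hFsum : ∑ i, Fv i = 0 := by
    rw [hFv]
    rw [Finset.sum_sub_distrib, Finset.sum_const, Finset.card_univ, Fintype.card_fin,
      ← Nat.cast_smul_eq_nsmul ℝ, smul_smul, mul_one_div, div_self hm0, one_smul, sub_self]
  -- Taylor remainders
  set r : Fin m → EuclideanSpace ℝ (Fin n) :=
    fun i => gradient (L i) (θ + β • Fv i) - gradient (L i) θ - H i (β • Fv i) with hr
  have hFvG : ∀ i, ‖Fv i‖ ≤ G := by
    intro i
    rw [hFv]
    simpa [norm_sub_rev] using hGbound i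
  have hrbound : ∀ i, ‖r i‖ ≤ ρ / 2 * (β ^ 2 * G ^ 2) := by
    intro i
    refine (taylor_grad_bound hρ.le (hdg i) (hHess i) θ (β • Fv i)).trans ?_
    have h2 : ‖β • Fv i‖ ^ 2 ≤ β ^ 2 * G ^ 2 := by
      rw [norm_smul, Real.norm_eq_abs, mul_pow, sq_abs]
      have := pow_le_pow_left₀ (norm_nonneg (Fv i)) (hFvG i) 2
      nlinarith [sq_nonneg β]
    nlinarith [hρ.le, norm_nonneg (β • Fv i)]
  have hstep : ∀ i : Fin m,
      gradient (L i) (θ - β • ((1 / (m : ℝ)) • ∑ j : Fin m, gradient (L j) θ - gradient (L i) θ))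
        = gradient (L i) θ + β • (H i (Fv i)) + r i := by
    intro i
    have harg : θ - β • ((1 / (m : ℝ)) • ∑ j : Fin m, gradient (L j) θ - gradient (L i) θ)
        = θ + β • Fv i := by
      rw [hFv]; module
    rw [harg]
    simp only [hr, map_smul]
    abel
  -- gradient of the regularizer
  have hKsym : ∀ (i : Fin m) (z u : EuclideanSpace ℝ (Fin n)),
      ⟪(H i - Hbar) z, u⟫ = ⟪(H i - Hbar) u, z⟫ := by
    intro i z u
    have h1 : ∀ z u : EuclideanSpace ℝ (Fin n), ⟪Hbar z, u⟫ = ⟪Hbar u, z⟫ := by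
      intro z u
      rw [hHbar]
      simp only [ContinuousLinearMap.smul_apply, ContinuousLinearMap.sum_apply,
        real_inner_smul_left, sum_inner]
      congr 1
      exact Finset.sum_congr rfl fun j _ => hessian_symm (hL j) θ z u
    simp only [ContinuousLinearMap.sub_apply, inner_sub_left]
    rw [h1 z u, hessian_symm (hL i) θ z u]
  have hFder : ∀ i : Fin m,
      HasFDerivAt (fun x => gradient (L i) x - (1 / (m : ℝ)) • ∑ j : Fin m, gradient (L j) x)
        (H i - Hbar) θ := by
    intro i
    exact ((hdg i θ).hasFDerivAt).sub
      ((HasFDerivAt.fun_sum fun j _ => (hdg j θ).hasFDerivAt).fun_const_smul _)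
  have hsq : ∀ i : Fin m,
      HasFDerivAt
        (fun x => ‖gradient (L i) x - (1 / (m : ℝ)) • ∑ j : Fin m, gradient (L j) x‖ ^ 2)
        ((fderivInnerCLM ℝ (Fv i, Fv i)).comp ((H i - Hbar).prod (H i - Hbar))) θ := by
    intro i
    have h := (hFder i).inner ℝ (hFder i)
    have heq : (fun x : EuclideanSpace ℝ (Fin n) =>
        ‖gradient (L i) x - (1 / (m : ℝ)) • ∑ j : Fin m, gradient (L j) x‖ ^ 2)
        = fun x => ⟪gradient (L i) x - (1 / (m : ℝ)) • ∑ j : Fin m, gradient (L j) x,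
            gradient (L i) x - (1 / (m : ℝ)) • ∑ j : Fin m, gradient (L j) x⟫ :=
      funext fun x => (real_inner_self_eq_norm_sq _).symm
    rw [heq]
    exact h
  have hgradR :
      gradient (fun x => ∑ i : Fin m,
          ‖gradient (L i) x - (1 / (m : ℝ)) • ∑ j : Fin m, gradient (L j) x‖ ^ 2) θ
        = ∑ i : Fin m, (2 : ℝ) • ((H i - Hbar) (Fv i)) := by
    refine HasGradientAt.gradient ?_
    rw [hasGradientAt_iff_hasFDerivAt]
    have hEq : (toDual ℝ (EuclideanSpace ℝ (Fin n))) (∑ i : Fin m, (2 : ℝ) • ((H i - Hbar) (Fv i)))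
        = ∑ i : Fin m, (fderivInnerCLM ℝ (Fv i, Fv i)).comp ((H i - Hbar).prod (H i - Hbar)) := by
      apply ContinuousLinearMap.ext
      intro u
      simp only [ContinuousLinearMap.sum_apply, ContinuousLinearMap.comp_apply,
        ContinuousLinearMap.prod_apply, fderivInnerCLM_apply, toDual_apply_apply, sum_inner]
      refine Finset.sum_congr rfl fun i _ => ?_
      rw [real_inner_smul_left, hKsym i (Fv i) u, real_inner_comm ((H i - Hbar) u) (Fv i)]
      ring
    rw [hEq]
    exact HasFDerivAt.fun_sum fun i _ => hsq i
  rw [hgradR]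
  simp only [hstep]
  -- algebra
  have hHK : ∑ i : Fin m, H i (Fv i) = ∑ i : Fin m, (H i - Hbar) (Fv i) := by
    simp only [ContinuousLinearMap.sub_apply]
    rw [Finset.sum_sub_distrib, ← map_sum, hFsum, map_zero, sub_zero]
  have hX : (1 / (m : ℝ)) • ∑ i : Fin m, (gradient (L i) θ + β • (H i (Fv i)) + r i)
      - ((1 / (m : ℝ)) • ∑ j : Fin m, gradient (L j) θ
          + (β / (2 * (m : ℝ))) • ∑ i : Fin m, (2 : ℝ) • ((H i - Hbar) (Fv i)))
      = (1 / (m : ℝ)) • ∑ i, r i := by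
    rw [Finset.sum_add_distrib, Finset.sum_add_distrib,
      ← Finset.smul_sum, ← Finset.smul_sum, ← hHK]
    match_scalars <;> field_simp <;> ring
  rw [hX, norm_smul]
  have hsum : ‖∑ i, r i‖ ≤ (m : ℝ) * (ρ / 2 * (β ^ 2 * G ^ 2)) := by
    refine (norm_sum_le _ _).trans ?_
    calc ∑ i, ‖r i‖ ≤ ∑ _i : Fin m, (ρ / 2 * (β ^ 2 * G ^ 2)) :=
          Finset.sum_le_sum fun i _ => hrbound i
      _ = (m : ℝ) * (ρ / 2 * (β ^ 2 * G ^ 2)) := by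
          simp [Finset.sum_const, Finset.card_univ, mul_comm]
  calc ‖(1 / (m : ℝ))‖ * ‖∑ i, r i‖
      ≤ (1 / (m : ℝ)) * ((m : ℝ) * (ρ / 2 * (β ^ 2 * G ^ 2))) := by
        rw [Real.norm_eq_abs, abs_of_nonneg (by positivity)]
        exact mul_le_mul_of_nonneg_left hsum (by positivity)
    _ = (ρ / 2) * β ^ 2 * G ^ 2 := by field_simp
end
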